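/- Fix a > 0 and let (b_n) be a real sequence with b_n → 0 as n → ∞. Then for all sufficiently large n — specifically, whenever b_n ∈ (−a log 2, a log 2 / (1 − log 2)) — one has sup_{u∈[0,1]} |u^a − u^{a+b_n}| ≤ 3 e^{−1} |b_n| / a. -/

import Mathlib

open Filter Set Topology

/-- Young-type inequality: for `v ∈ [0,1]`, `t ∈ [0,1]`, `v ^ (1 - t) ≤ v + t`. -/
lemma young_aux {v t : ℝ} (hv0 : 0 ≤ v) (ht0 : 0 ≤ t) (ht1 : t ≤ 1) :
    v ^ (1 - t) ≤ v + t := by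
  have h := Real.geom_mean_le_arith_mean2_weighted (w₁ := 1 - t) (w₂ := t)
    (p₁ := v) (p₂ := 1) (by linarith) ht0 hv0 zero_le_one (by ring)
  simpa [Real.one_rpow] using h.trans (by nlinarith)

/-- Lemma A.3(ii): uniform bound on `|u^a − u^{a+b_n}|` for large `n`. -/
theorem sup_abs_rpow_perturbation (a : ℝ) (ha : 0 < a) (b : ℕ → ℝ)
    (hb : Tendsto b atTop (nhds 0)) :
    ∀ n : ℕ, b n ∈ Ioo (-(a * Real.log 2)) (a * Real.log 2 / (1 - Real.log 2)) →
      ∀ u ∈ Icc (0:ℝ) 1, |u ^ a - u ^ (a + b n)| ≤ 3 * Real.exp (-1) * |b n| / a := by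
  intro n hbn u hu
  obtain ⟨hu0, hu1⟩ := hu
  have hlog2 : Real.log 2 < 1 := by
    have := Real.log_two_lt_d9
    linarith
  have hab : 0 < a + b n := by
    have h1 : -(a * Real.log 2) < b n := hbn.1
    nlinarith
  -- first show |u^a - u^(a+b n)| ≤ |b n| / a
  have key : |u ^ a - u ^ (a + b n)| ≤ |b n| / a := by
    rcases eq_or_lt_of_le hu0 with h0 | hu0'
    · simp [← h0, Real.zero_rpow ha.ne', Real.zero_rpow hab.ne',
        div_nonneg (abs_nonneg _) ha.le]
    rcases le_or_gt 0 (b n) with hb0 | hb0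
    · -- b n ≥ 0 : u^(a+bn) ≤ u^a, use v = u^(a+bn)
      have hle : u ^ (a + b n) ≤ u ^ a :=
        Real.rpow_le_rpow_of_exponent_ge hu0' hu1 (by linarith)
      rw [abs_of_nonneg (by linarith), abs_of_nonneg hb0]
      set v := u ^ (a + b n) with hv
      have hv0 : 0 ≤ v := Real.rpow_nonneg hu0 _
      have hua : u ^ a = v ^ (1 - b n / (a + b n)) := by
        rw [hv, ← Real.rpow_mul hu0]; congr 1; field_simp; ring
      have ht0 : 0 ≤ b n / (a + b n) := div_nonneg hb0 hab.le
      have ht1 : b n / (a + b n) ≤ 1 := by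
        rw [div_le_one hab]; linarith
      have h := young_aux hv0 ht0 ht1
      rw [hua]
      have : b n / (a + b n) ≤ b n / a :=
        div_le_div_of_nonneg_left hb0 ha (by linarith)
      linarith
    · -- b n < 0 : u^a ≤ u^(a+bn), use v = u^a
      have hle : u ^ a ≤ u ^ (a + b n) :=
        Real.rpow_le_rpow_of_exponent_ge hu0' hu1 (by linarith)
      rw [abs_of_nonpos (by linarith), abs_of_neg hb0]
      set v := u ^ a with hv
      have hv0 : 0 ≤ v := Real.rpow_nonneg hu0 _
      have hua : u ^ (a + b n) = v ^ (1 - (-(b n)) / a) := by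
        rw [hv, ← Real.rpow_mul hu0]; congr 1; field_simp; ring
      have ht0 : 0 ≤ (-(b n)) / a := div_nonneg (by linarith) ha.le
      have ht1 : (-(b n)) / a ≤ 1 := by
        rw [div_le_one ha]; linarith
      have h := young_aux hv0 ht0 ht1
      rw [hua] at hle ⊢
      linarith
  refine key.trans ?_
  -- |b n| / a ≤ 3 * exp (-1) * |b n| / a  since 1 ≤ 3/e
  have he : Real.exp 1 < 3 := by
    have := Real.exp_one_lt_d9; linarith
  have h1 : (1:ℝ) ≤ 3 * Real.exp (-1) := by
    rw [Real.exp_neg]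
    have hp := Real.exp_pos 1
    rw [show (3:ℝ) * (Real.exp 1)⁻¹ = 3 / Real.exp 1 by ring, le_div_iff₀ hp]
    linarith
  have hbnn : 0 ≤ |b n| := abs_nonneg _
  rw [div_le_div_iff₀ ha ha]
  nlinarith [mul_le_mul_of_nonneg_left h1 hbnn]
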